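/- Let T be a threshold graph that is not complete, with largest clique size d, and suppose that all maximal cliques of T have cardinality d (i.e., the clique complex Δ(T) is pure). Then b_i = 1 for every i = 1, …, d−1, and moreover Δ(T) is a matroid complex, i.e., the restriction of the clique complex to every subset of vertices is pure. -/

import Mathlib

open Finset

/-- `G` is chordal: every cycle of length at least 4 has a chord, i.e. an edge
joining two non-consecutive vertices of the cycle. -/
def IsChordal {V : Type*} (G : SimpleGraph V) : Prop :=
  ∀ (n : ℕ), 4 ≤ n → ∀ f : ZMod n → V, Function.Injective f →
    (∀ i : ZMod n, G.Adj (f i) (f (i + 1))) →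
    ∃ i j : ZMod n, i ≠ j ∧ i + 1 ≠ j ∧ j + 1 ≠ i ∧ G.Adj (f i) (f j)

/-- The number of cliques of `G` with exactly `i` vertices. -/
noncomputable def cliqueCount {V : Type*} [Fintype V] (G : SimpleGraph V) (i : ℕ) : ℕ :=
  {s : Finset V | G.IsNClique i s}.ncard

/-- `W(G - Y)`: the number of connected components of the subgraph of `G` induced on the
complement of `Y`. -/
noncomputable def numComponents {V : Type*} [Fintype V] [DecidableEq V] (G : SimpleGraph V)
    (Y : Finset V) : ℕ :=
  Nat.card (G.induce (↑(Yᶜ) : Set V)).ConnectedComponent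

/-- A vertex-cut of `G`: a set of vertices whose removal disconnects `G`. -/
def IsVertexCut {V : Type*} [Fintype V] [DecidableEq V] (G : SimpleGraph V) (Y : Finset V) :
    Prop :=
  ¬ (G.induce (↑(Yᶜ) : Set V)).Connected

/-- The vertex connectivity `κ(G)`: the minimum cardinality of a vertex-cut. -/
noncomputable def vertexConnectivity {V : Type*} [Fintype V] [DecidableEq V]
    (G : SimpleGraph V) : ℕ :=
  sInf {k | ∃ Y : Finset V, IsVertexCut G Y ∧ Y.card = k}

/-- `s` is a maximal clique of `G`. -/
def IsMaxCliqueOf {V : Type*} (G : SimpleGraph V) (s : Finset V) : Prop :=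
  G.IsClique (↑s : Set V) ∧ ∀ t : Finset V, G.IsClique (↑t : Set V) → s ⊆ t → s = t

/-- A dominating `i`-clique of `G`: a set of `i`-cliques such that every maximal clique of
order at least `i` contains some member of the set. -/
def IsDominatingCliqueSet {V : Type*} (G : SimpleGraph V) (i : ℕ)
    (D : Finset (Finset V)) : Prop :=
  (∀ s ∈ D, G.IsNClique i s) ∧
    ∀ t : Finset V, IsMaxCliqueOf G t → i ≤ t.card → ∃ s ∈ D, s ⊆ t

/-- `d_i(G)`: the minimum cardinality of a dominating `i`-clique of `G`. -/
noncomputable def domNum {V : Type*} (G : SimpleGraph V) (i : ℕ) : ℕ :=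
  sInf {k | ∃ D : Finset (Finset V), IsDominatingCliqueSet G i D ∧ D.card = k}

/-- `κ̃(G)`: the maximum cardinality of the intersection of a pair of distinct maximal
cliques of `G`. -/
noncomputable def kappaTilde {V : Type*} [DecidableEq V] (G : SimpleGraph V) : ℕ :=
  sSup {k | ∃ C C' : Finset V, IsMaxCliqueOf G C ∧ IsMaxCliqueOf G C' ∧ C ≠ C' ∧
    (C ∩ C').card = k}

/-- `G` restricted to the vertex set `s` is a threshold graph: it can be built from a
one-vertex graph by repeatedly adding either an isolated vertex or a vertex adjacent to
all existing vertices. -/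
inductive IsThresholdOn {V : Type*} [DecidableEq V] (G : SimpleGraph V) : Finset V → Prop
  | single (v : V) : IsThresholdOn G {v}
  | isolated (s : Finset V) (v : V) (hv : v ∉ s) (hs : IsThresholdOn G s)
      (hiso : ∀ u ∈ s, ¬ G.Adj v u) : IsThresholdOn G (insert v s)
  | dominating (s : Finset V) (v : V) (hv : v ∉ s) (hs : IsThresholdOn G s)
      (hdom : ∀ u ∈ s, G.Adj v u) : IsThresholdOn G (insert v s)

/-- `G` is a threshold graph. -/
def IsThreshold {V : Type*} [Fintype V] [DecidableEq V] (G : SimpleGraph V) : Prop :=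
  IsThresholdOn G Finset.univ

/-- `|C_i(G)|`: the number of maximal cliques of `G` with exactly `i` vertices. -/
noncomputable def maxCliqueCount {V : Type*} [Fintype V] (G : SimpleGraph V) (i : ℕ) : ℕ :=
  {s : Finset V | IsMaxCliqueOf G s ∧ s.card = i}.ncard

/-- `s` is a maximal clique of `G` among the cliques contained in `W`, i.e. a facet of the
restriction of the clique complex of `G` to `W`. -/
def IsMaxCliqueWithin {V : Type*} (G : SimpleGraph V) (W : Finset V) (s : Finset V) : Prop :=
  s ⊆ W ∧ G.IsClique (↑s : Set V) ∧
    ∀ t : Finset V, t ⊆ W → G.IsClique (↑t : Set V) → s ⊆ t → s = t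

/-- The restriction of the clique complex of `G` to `W` is pure: all its facets have the
same cardinality. -/
def PureOn {V : Type*} (G : SimpleGraph V) (W : Finset V) : Prop :=
  ∀ s t : Finset V, IsMaxCliqueWithin G W s → IsMaxCliqueWithin G W t → s.card = t.card

lemma exists_max_within {V : Type} [DecidableEq V] (T : SimpleGraph V) (W t : Finset V)
    (htW : t ⊆ W) (hcl : T.IsClique (↑t : Set V)) :
    ∃ u : Finset V, t ⊆ u ∧ IsMaxCliqueWithin T W u := by
  classical
  set S : Finset (Finset V) :=
    W.powerset.filter (fun u => t ⊆ u ∧ T.IsClique (↑u : Set V)) with hS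
  have htS : t ∈ S := by
    simp only [hS, Finset.mem_filter, Finset.mem_powerset]
    exact ⟨htW, Finset.Subset.refl t, hcl⟩
  obtain ⟨u, huS, hmax⟩ := S.exists_max_image Finset.card ⟨t, htS⟩
  simp only [hS, Finset.mem_filter, Finset.mem_powerset] at huS
  refine ⟨u, huS.2.1, huS.1, huS.2.2, ?_⟩
  intro r hrW hrcl hur
  have hrS : r ∈ S := by
    simp only [hS, Finset.mem_filter, Finset.mem_powerset]
    exact ⟨hrW, huS.2.1.trans hur, hrcl⟩
  exact Finset.eq_of_subset_of_card_le hur (hmax r hrS)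

lemma splitOn {V : Type} [DecidableEq V] (T : SimpleGraph V) (s : Finset V)
    (hs : IsThresholdOn T s) :
    (∀ t t' : Finset V, IsMaxCliqueWithin T s t → IsMaxCliqueWithin T s t' →
      t.card = t'.card) →
    ∃ A B : Finset V, Disjoint A B ∧ A ∪ B = s ∧
      (∀ a ∈ A, ∀ u ∈ s, u ≠ a → T.Adj a u) ∧
      (∀ u ∈ B, ∀ w ∈ B, ¬ T.Adj u w) := by
  induction hs with
  | single v =>
      intro _
      refine ⟨∅, {v}, by simp, by simp, by simp, ?_⟩
      intro u hu w hw hadj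
      simp only [Finset.mem_singleton] at hu hw
      subst hu; subst hw
      exact hadj.ne rfl
  | isolated s v hv hs hiso ih =>
      intro hp
      refine ⟨∅, insert v s, by simp, by simp, by simp, ?_⟩
      intro u hu w hw hadj
      rcases Finset.mem_insert.mp hu with rfl | hu'
      · rcases Finset.mem_insert.mp hw with rfl | hw'
        · exact hadj.ne rfl
        · exact hiso w hw' hadj
      · rcases Finset.mem_insert.mp hw with rfl | hw'
        · exact hiso u hu' hadj.symm
        · -- u, w ∈ s adjacent: contradiction with purity
          have hne : u ≠ w := hadj.ne
          have hclpair : T.IsClique (↑({u, w} : Finset V) : Set V) := by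
            intro x hx y hy hxy
            simp only [Finset.coe_insert, Finset.coe_singleton, Set.mem_insert_iff,
              Set.mem_singleton_iff] at hx hy
            rcases hx with rfl | rfl <;> rcases hy with rfl | rfl
            · exact absurd rfl hxy
            · exact hadj
            · exact hadj.symm
            · exact absurd rfl hxy
          have hsub : ({u, w} : Finset V) ⊆ insert v s := by
            intro x hx
            rcases Finset.mem_insert.mp hx with rfl | hx
            · exact Finset.mem_insert_of_mem hu'
            · rw [Finset.mem_singleton] at hx; subst hx
              exact Finset.mem_insert_of_mem hw'
          obtain ⟨m, hm1, hm2⟩ := exists_max_within T (insert v s) {u, w} hsub hclpair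
          have hvmax : IsMaxCliqueWithin T (insert v s) {v} := by
            refine ⟨by simp, by simp, ?_⟩
            intro r hrW hrcl hvr
            refine Finset.Subset.antisymm hvr ?_
            intro x hx
            rw [Finset.mem_singleton]
            by_contra hxv
            have hxs : x ∈ s := by
              rcases Finset.mem_insert.mp (hrW hx) with h | h
              · exact absurd h hxv
              · exact h
            exact hiso x hxs (hrcl (hvr (Finset.mem_singleton_self v)) hx
              (fun h => hxv h.symm))
          have hcards := hp m {v} hm2 hvmax
          rw [Finset.card_singleton] at hcards
          have h2 : 2 ≤ m.card := by
            have : ({u, w} : Finset V).card = 2 := Finset.card_pair hne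
            calc 2 = ({u, w} : Finset V).card := this.symm
              _ ≤ m.card := Finset.card_le_card hm1
          omega
  | dominating s v hv hs hdom ih =>
      intro hp
      have key : ∀ t, IsMaxCliqueWithin T s t →
          IsMaxCliqueWithin T (insert v s) (insert v t) := by
        intro t ht
        obtain ⟨htW, htcl, htmax⟩ := ht
        refine ⟨Finset.insert_subset_insert _ htW, ?_, ?_⟩
        · rw [Finset.coe_insert]
          exact htcl.insert (fun b hb _ => hdom b (htW hb))
        · intro r hrW hrcl hsub
          have hvr : v ∈ r := hsub (Finset.mem_insert_self _ _)
          have h1 : t ⊆ r.erase v := by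
            intro x hx
            exact Finset.mem_erase.mpr
              ⟨fun hxv => hv (htW (hxv ▸ hx)), hsub (Finset.mem_insert_of_mem hx)⟩
          have h2 : r.erase v ⊆ s := by
            intro x hx
            rcases Finset.mem_insert.mp (hrW (Finset.mem_of_mem_erase hx)) with h | h
            · exact absurd h (Finset.ne_of_mem_erase hx)
            · exact h
          have h3 : T.IsClique (↑(r.erase v) : Set V) :=
            hrcl.subset (by exact_mod_cast Finset.erase_subset v r)
          have h4 := htmax _ h2 h3 h1
          apply Finset.Subset.antisymm hsub
          intro x hx
          by_cases hxv : x = v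
          · exact hxv ▸ Finset.mem_insert_self _ _
          · exact Finset.mem_insert_of_mem (h4 ▸ Finset.mem_erase.mpr ⟨hxv, hx⟩)
      have hp' : ∀ t t' : Finset V, IsMaxCliqueWithin T s t → IsMaxCliqueWithin T s t' →
          t.card = t'.card := by
        intro t t' h h'
        have hc := hp _ _ (key t h) (key t' h')
        have hvt : v ∉ t := fun h0 => hv (h.1 h0)
        have hvt' : v ∉ t' := fun h0 => hv (h'.1 h0)
        rw [Finset.card_insert_of_notMem hvt, Finset.card_insert_of_notMem hvt'] at hc
        omega
      obtain ⟨A, B, hAB, hUnion, hdomA, hindB⟩ := ih hp'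
      have hBs : B ⊆ s := hUnion ▸ Finset.subset_union_right
      have hAs : A ⊆ s := hUnion ▸ Finset.subset_union_left
      refine ⟨insert v A, B, ?_, ?_, ?_, hindB⟩
      · rw [Finset.disjoint_insert_left]
        exact ⟨fun h => hv (hBs h), hAB⟩
      · rw [Finset.insert_union, hUnion]
      · intro a ha u hu hua
        rcases Finset.mem_insert.mp ha with rfl | haA
        · rcases Finset.mem_insert.mp hu with rfl | hus
          · exact absurd rfl hua
          · exact hdom u hus
        · rcases Finset.mem_insert.mp hu with rfl | hus
          · exact (hdom a (hAs haA)).symm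
          · exact hdomA a haA u hus hua

lemma clique_class {V : Type} [Fintype V] [DecidableEq V] (T : SimpleGraph V)
    (A B : Finset V) (hAB : Disjoint A B) (hU : A ∪ B = Finset.univ)
    (hdomA : ∀ a ∈ A, ∀ u : V, u ≠ a → T.Adj a u)
    (hindB : ∀ u ∈ B, ∀ w ∈ B, ¬ T.Adj u w) :
    ∀ s : Finset V, T.IsClique (↑s : Set V) ↔ (s ∩ B).card ≤ 1 := by
  intro s
  constructor
  · intro hcl
    by_contra h
    push_neg at h
    obtain ⟨x, hx, y, hy, hxy⟩ := Finset.one_lt_card.mp h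
    rw [Finset.mem_inter] at hx hy
    exact hindB x hx.2 y hy.2 (hcl (Finset.mem_coe.mpr hx.1) (Finset.mem_coe.mpr hy.1) hxy)
  · intro h x hx y hy hxy
    have hx' : x ∈ s := hx
    have hy' : y ∈ s := hy
    by_cases hxA : x ∈ A
    · exact hdomA x hxA y (Ne.symm hxy)
    · by_cases hyA : y ∈ A
      · exact (hdomA y hyA x hxy).symm
      · exfalso
        have hxB : x ∈ B := by
          have := hU ▸ Finset.mem_univ x
          rcases Finset.mem_union.mp this with h1 | h1
          · exact absurd h1 hxA
          · exact h1
        have hyB : y ∈ B := by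
          have := hU ▸ Finset.mem_univ y
          rcases Finset.mem_union.mp this with h1 | h1
          · exact absurd h1 hyA
          · exact h1
        have hsub : ({x, y} : Finset V) ⊆ s ∩ B := by
          intro z hz
          rcases Finset.mem_insert.mp hz with rfl | hz
          · exact Finset.mem_inter.mpr ⟨hx', hxB⟩
          · rw [Finset.mem_singleton] at hz; subst hz
            exact Finset.mem_inter.mpr ⟨hy', hyB⟩
        have : 2 ≤ (s ∩ B).card := by
          calc 2 = ({x, y} : Finset V).card := (Finset.card_pair hxy).symm
            _ ≤ (s ∩ B).card := Finset.card_le_card hsub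
        omega

lemma clique_count_split {V : Type} [Fintype V] [DecidableEq V] (T : SimpleGraph V)
    (A B : Finset V) (hAB : Disjoint A B) (hU : A ∪ B = Finset.univ)
    (hdomA : ∀ a ∈ A, ∀ u : V, u ≠ a → T.Adj a u)
    (hindB : ∀ u ∈ B, ∀ w ∈ B, ¬ T.Adj u w) (i : ℕ) (hi : 1 ≤ i) :
    cliqueCount T i = A.card.choose i + B.card * A.card.choose (i - 1) := by
  classical
  have hclass := clique_class T A B hAB hU hdomA hindB
  have h0 : cliqueCount T i = (Finset.univ.filter (fun s => T.IsNClique i s)).card := by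
    rw [cliqueCount,
      show {s : Finset V | T.IsNClique i s} =
        ↑(Finset.univ.filter (fun s => T.IsNClique i s)) by ext s; simp,
      Set.ncard_coe_finset]
  have hset : Finset.univ.filter (fun s => T.IsNClique i s) =
      A.powersetCard i ∪ B.biUnion (fun b => (A.powersetCard (i-1)).image (insert b)) := by
    ext s
    simp only [Finset.mem_filter, Finset.mem_univ, true_and, Finset.mem_union,
      Finset.mem_powersetCard, Finset.mem_biUnion, Finset.mem_image]
    constructor
    · rintro ⟨hcl, hcard⟩
      have hle := (hclass s).mp hcl
      have hsplit : s = (s ∩ A) ∪ (s ∩ B) := by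
        rw [← Finset.inter_union_distrib_left, hU, Finset.inter_univ]
      have hdisj : Disjoint (s ∩ A) (s ∩ B) :=
        hAB.mono Finset.inter_subset_right Finset.inter_subset_right
      have hcardsplit : (s ∩ A).card + (s ∩ B).card = i := by
        rw [← Finset.card_union_of_disjoint hdisj, ← hsplit, hcard]
      rcases Nat.lt_or_ge (s ∩ B).card 1 with hc0 | hc1
      · left
        have he : s ∩ B = ∅ := Finset.card_eq_zero.mp (by omega)
        refine ⟨?_, hcard⟩
        intro x hx
        have hxu := hU ▸ Finset.mem_univ x
        rcases Finset.mem_union.mp hxu with h1 | h1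
        · exact h1
        · exact absurd (Finset.mem_inter.mpr ⟨hx, h1⟩) (by simp [he])
      · right
        have h1' : (s ∩ B).card = 1 := le_antisymm hle hc1
        obtain ⟨b, hb⟩ := Finset.card_eq_one.mp h1'
        have hbmem : b ∈ s ∩ B := hb ▸ Finset.mem_singleton_self b
        have hbB : b ∈ B := (Finset.mem_inter.mp hbmem).2
        refine ⟨b, hbB, s ∩ A, ⟨Finset.inter_subset_right, by omega⟩, ?_⟩
        rw [Finset.insert_eq, ← hb, Finset.union_comm, ← hsplit]
    · rintro (⟨hsub, hcard⟩ | ⟨b, hbB, a, ⟨haA, hacard⟩, rfl⟩)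
      · refine ⟨(hclass s).mpr ?_, hcard⟩
        have he : s ∩ B = ∅ := by
          apply Finset.eq_empty_of_forall_notMem
          intro x hx
          rw [Finset.mem_inter] at hx
          exact Finset.disjoint_left.mp hAB (hsub hx.1) hx.2
        simp [he]
      · have hba : b ∉ a := fun h => Finset.disjoint_left.mp hAB (haA h) hbB
        constructor
        · apply (hclass _).mpr
          have hss : insert b a ∩ B ⊆ {b} := by
            intro x hx
            rcases Finset.mem_inter.mp hx with ⟨hx1, hx2⟩
            rcases Finset.mem_insert.mp hx1 with rfl | hxa
            · exact Finset.mem_singleton_self _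
            · exact absurd hx2 (Finset.disjoint_left.mp hAB (haA hxa))
          calc (insert b a ∩ B).card ≤ ({b} : Finset V).card := Finset.card_le_card hss
            _ = 1 := Finset.card_singleton b
        · rw [Finset.card_insert_of_notMem hba, hacard]; omega
  have hdisj1 : Disjoint (A.powersetCard i)
      (B.biUnion (fun b => (A.powersetCard (i-1)).image (insert b))) := by
    rw [Finset.disjoint_left]
    intro s hs hs2
    rw [Finset.mem_powersetCard] at hs
    rw [Finset.mem_biUnion] at hs2
    obtain ⟨b, hbB, hs2⟩ := hs2
    rw [Finset.mem_image] at hs2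
    obtain ⟨a, _, rfl⟩ := hs2
    exact Finset.disjoint_left.mp hAB (hs.1 (Finset.mem_insert_self b a)) hbB
  have hbi : (B.biUnion (fun b => (A.powersetCard (i-1)).image (insert b))).card
      = B.card * A.card.choose (i-1) := by
    rw [Finset.card_biUnion]
    · have : ∀ b ∈ B, ((A.powersetCard (i-1)).image (insert b)).card
          = A.card.choose (i-1) := by
        intro b hbB
        rw [Finset.card_image_of_injOn, Finset.card_powersetCard]
        intro a ha a' ha' hins
        rw [Finset.mem_coe, Finset.mem_powersetCard] at ha ha'
        have hba : b ∉ a := fun h => Finset.disjoint_left.mp hAB (ha.1 h) hbB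
        have hba' : b ∉ a' := fun h => Finset.disjoint_left.mp hAB (ha'.1 h) hbB
        rw [← Finset.erase_insert hba, ← Finset.erase_insert hba', hins]
      rw [Finset.sum_congr rfl this, Finset.sum_const, smul_eq_mul]
    · intro b hb b' hb' hne
      dsimp only [Function.onFun]
      rw [Finset.disjoint_left]
      intro s hs hs'
      rw [Finset.mem_image] at hs hs'
      obtain ⟨a, ha, rfl⟩ := hs
      obtain ⟨a', ha', heq⟩ := hs'
      rw [Finset.mem_powersetCard] at ha ha'
      have : b' ∈ insert b a := heq ▸ Finset.mem_insert_self b' a'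
      rcases Finset.mem_insert.mp this with h | h
      · exact hne (h.symm)
      · exact Finset.disjoint_left.mp hAB (ha.1 h) hb'
  rw [h0, hset, Finset.card_union_of_disjoint hdisj1, Finset.card_powersetCard, hbi]

lemma key_poly (k : ℕ) (x : ℤ) :
    ∑ j ∈ Finset.range (k+1), ((k.choose (j+1) : ℤ)) * x ^ j
      = ∑ j ∈ Finset.range k, (x+1) ^ j := by
  have hbin : (x+1)^k = ∑ j ∈ Finset.range k, (k.choose (j+1) : ℤ) * x^(j+1) + 1 := by
    rw [add_pow, Finset.sum_range_succ']
    simp only [one_pow, mul_one, pow_zero, Nat.choose_zero_right, Nat.cast_one, one_mul]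
    congr 1
    apply Finset.sum_congr rfl
    intro j _
    ring
  rcases eq_or_ne x 0 with rfl | hx
  · rw [Finset.sum_eq_single_of_mem 0 (Finset.mem_range.mpr (Nat.succ_pos k))]
    · simp [Nat.choose_one_right]
    · intro j _ hj
      simp [zero_pow hj]
  · apply mul_right_cancel₀ hx
    rw [Finset.sum_mul, Finset.sum_mul]
    have h1 : ∑ j ∈ Finset.range (k+1), (k.choose (j+1) : ℤ) * x ^ j * x
        = ∑ j ∈ Finset.range k, (k.choose (j+1) : ℤ) * x^(j+1) := by
      rw [Finset.sum_range_succ, Nat.choose_succ_self]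
      simp only [Nat.cast_zero, zero_mul]
      rw [add_zero]
      apply Finset.sum_congr rfl
      intro j _
      ring
    have h2 : ∑ j ∈ Finset.range k, (x+1) ^ j * x = (x+1)^k - 1 := by
      have := geom_sum_mul (x+1) k
      simp only [add_sub_cancel_right] at this
      rw [← this, Finset.sum_mul]
    rw [h1, h2, hbin]
    ring

lemma cval (k m : ℕ) (x : ℤ) :
    ∑ j ∈ Finset.range (k+1), ((k.choose (j+1) + m * k.choose j : ℕ) : ℤ) * x ^ j
      = ∑ j ∈ Finset.range (k+1), (if j + 1 = k + 1 then (m : ℤ) else 1) * (x+1) ^ j := by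
  have hbin2 : ∑ j ∈ Finset.range (k+1), (k.choose j : ℤ) * x ^ j = (x+1)^k := by
    rw [add_pow]
    apply Finset.sum_congr rfl
    intro j _
    simp [mul_comm]
  have lhs : ∑ j ∈ Finset.range (k+1), ((k.choose (j+1) + m * k.choose j : ℕ) : ℤ) * x ^ j
      = (∑ j ∈ Finset.range (k+1), (k.choose (j+1) : ℤ) * x ^ j)
        + (m : ℤ) * ∑ j ∈ Finset.range (k+1), (k.choose j : ℤ) * x ^ j := by
    rw [Finset.mul_sum, ← Finset.sum_add_distrib]
    apply Finset.sum_congr rfl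
    intro j _
    push_cast
    ring
  have rhs : ∑ j ∈ Finset.range (k+1), (if j + 1 = k + 1 then (m : ℤ) else 1) * (x+1) ^ j
      = (∑ j ∈ Finset.range k, (x+1) ^ j) + (m : ℤ) * (x+1)^k := by
    rw [Finset.sum_range_succ, if_pos rfl]
    congr 1
    apply Finset.sum_congr rfl
    intro j hj
    rw [if_neg (by rw [Finset.mem_range] at hj; omega), one_mul]
  rw [lhs, rhs, key_poly, hbin2]

lemma coeff_zero_of_eval_zero (d : ℕ) (e : ℕ → ℤ)
    (h : ∀ y : ℤ, ∑ j ∈ Finset.range d, e j * y ^ j = 0) :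
    ∀ j < d, e j = 0 := by
  intro j0 hj0
  set p : Polynomial ℤ := ∑ j ∈ Finset.range d, Polynomial.C (e j) * Polynomial.X ^ j with hp
  have hev : ∀ y : ℤ, p.eval y = 0 := by
    intro y
    rw [hp, Polynomial.eval_finset_sum]
    simp only [Polynomial.eval_mul, Polynomial.eval_C, Polynomial.eval_pow, Polynomial.eval_X]
    exact h y
  have hp0 : p = 0 := Polynomial.funext (fun y => by rw [hev y, Polynomial.eval_zero])
  have hc : p.coeff j0 = e j0 := by
    rw [hp, Polynomial.finset_sum_coeff]
    rw [Finset.sum_eq_single_of_mem j0 (Finset.mem_range.mpr hj0)]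
    · simp
    · intro j _ hj
      simp [Polynomial.coeff_C_mul, Polynomial.coeff_X_pow, Ne.symm hj]
  rw [hp0, Polynomial.coeff_zero] at hc
  exact hc.symm

lemma pure_of_split {V : Type} [Fintype V] [DecidableEq V] (T : SimpleGraph V)
    (A B : Finset V) (hAB : Disjoint A B) (hU : A ∪ B = Finset.univ)
    (hdomA : ∀ a ∈ A, ∀ u : V, u ≠ a → T.Adj a u)
    (hindB : ∀ u ∈ B, ∀ w ∈ B, ¬ T.Adj u w) (W : Finset V) :
    ∀ s : Finset V, IsMaxCliqueWithin T W s →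
      s.card = (A ∩ W).card + (if (B ∩ W).Nonempty then 1 else 0) := by
  intro s hs
  obtain ⟨hsW, hscl, hsmax⟩ := hs
  -- A ∩ W ⊆ s
  have hAWs : A ∩ W ⊆ s := by
    intro a ha
    rw [Finset.mem_inter] at ha
    by_contra has
    have hins : T.IsClique (↑(insert a s) : Set V) := by
      rw [Finset.coe_insert]
      exact hscl.insert (fun b hb hab => hdomA a ha.1 b (fun h => hab h.symm))
    have := hsmax (insert a s) (Finset.insert_subset ha.2 hsW) hins
      (Finset.subset_insert a s)
    exact has (this ▸ Finset.mem_insert_self a s)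
  have hsA : s ∩ A = A ∩ W := by
    apply Finset.Subset.antisymm
    · intro x hx
      rw [Finset.mem_inter] at hx ⊢
      exact ⟨hx.2, hsW hx.1⟩
    · intro x hx
      rw [Finset.mem_inter]
      exact ⟨hAWs hx, (Finset.mem_inter.mp hx).1⟩
  have hsplit : s = (s ∩ A) ∪ (s ∩ B) := by
    rw [← Finset.inter_union_distrib_left, hU, Finset.inter_univ]
  have hdisj : Disjoint (s ∩ A) (s ∩ B) :=
    hAB.mono Finset.inter_subset_right Finset.inter_subset_right
  have hcards : s.card = (s ∩ A).card + (s ∩ B).card := by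
    conv_lhs => rw [hsplit]
    exact Finset.card_union_of_disjoint hdisj
  have hle1 : (s ∩ B).card ≤ 1 := by
    by_contra h
    push_neg at h
    obtain ⟨x, hx, y, hy, hxy⟩ := Finset.one_lt_card.mp h
    rw [Finset.mem_inter] at hx hy
    exact hindB x hx.2 y hy.2 (hscl (Finset.mem_coe.mpr hx.1) (Finset.mem_coe.mpr hy.1) hxy)
  by_cases hBW : (B ∩ W).Nonempty
  · -- then s ∩ B has exactly one element
    have hne : (s ∩ B).Nonempty := by
      by_contra hemp
      rw [Finset.not_nonempty_iff_eq_empty] at hemp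
      -- s = A ∩ W, extend by b
      obtain ⟨b, hb⟩ := hBW
      rw [Finset.mem_inter] at hb
      have hsA' : s ⊆ A := by
        intro x hx
        have hxu := hU ▸ Finset.mem_univ x
        rcases Finset.mem_union.mp hxu with h1 | h1
        · exact h1
        · exact absurd (Finset.mem_inter.mpr ⟨hx, h1⟩) (by simp [hemp])
      have hbs : b ∉ s := fun h => Finset.disjoint_right.mp hAB hb.1 (hsA' h)
      have hins : T.IsClique (↑(insert b s) : Set V) := by
        rw [Finset.coe_insert]
        exact hscl.insert (fun a ha hba =>
          (hdomA a (hsA' ha) b hba).symm)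
      have := hsmax (insert b s) (Finset.insert_subset hb.2 hsW) hins
        (Finset.subset_insert b s)
      exact hbs (this ▸ Finset.mem_insert_self b s)
    have h1 : (s ∩ B).card = 1 := le_antisymm hle1 (Finset.card_pos.mpr hne)
    rw [if_pos hBW, hcards, hsA, h1]
  · have hemp : s ∩ B = ∅ := by
      rw [← Finset.subset_empty]
      intro x hx
      rw [Finset.mem_inter] at hx
      exact absurd ⟨x, Finset.mem_inter.mpr ⟨hx.2, hsW hx.1⟩⟩ hBW
    rw [if_neg hBW, hcards, hsA, hemp]
    simp


/-- Let `T` be a non-complete threshold graph with largest clique size `d` whose clique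
complex is pure (all maximal cliques have cardinality `d`). Then `b i = 1` for every
`1 ≤ i ≤ d - 1`, and the clique complex of `T` is a matroid complex: its restriction to
every subset of vertices is pure. -/
theorem stmt16 {V : Type} [Fintype V] [DecidableEq V] (T : SimpleGraph V)
    (hnc : T ≠ ⊤) (hth : IsThreshold T)
    (d : ℕ) (hd : ∃ s : Finset V, T.IsNClique d s)
    (hdmax : ∀ (m : ℕ) (s : Finset V), T.IsNClique m s → m ≤ d)
    (hpure : ∀ s : Finset V, IsMaxCliqueOf T s → s.card = d)
    (b : ℕ → ℤ)
    (hb : ∀ x : ℤ, ∑ i ∈ Finset.Icc 1 d, b i * (x + 1) ^ (i - 1) =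
      ∑ i ∈ Finset.Icc 1 d, (cliqueCount T i : ℤ) * x ^ (i - 1)) :
    (∀ i : ℕ, 1 ≤ i → i ≤ d - 1 → b i = 1) ∧
    ∀ W : Finset V, PureOn T W := by
  classical
  have hWithinIff : ∀ t : Finset V, IsMaxCliqueWithin T Finset.univ t ↔ IsMaxCliqueOf T t := by
    intro t
    constructor
    · rintro ⟨_, hcl, hmax⟩
      exact ⟨hcl, fun r hr hsub => hmax r (Finset.subset_univ r) hr hsub⟩
    · rintro ⟨hcl, hmax⟩
      exact ⟨Finset.subset_univ t, hcl, fun r _ hr hsub => hmax r hr hsub⟩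
  have hp : ∀ t t' : Finset V, IsMaxCliqueWithin T Finset.univ t →
      IsMaxCliqueWithin T Finset.univ t' → t.card = t'.card := by
    intro t t' h h'
    rw [hpure t ((hWithinIff t).mp h), hpure t' ((hWithinIff t').mp h')]
  obtain ⟨A, B, hAB, hU, hdomA', hindB⟩ := splitOn T Finset.univ hth hp
  have hdomA : ∀ a ∈ A, ∀ u : V, u ≠ a → T.Adj a u := fun a ha u hu =>
    hdomA' a ha u (Finset.mem_univ u) hu
  have hex : ∃ u w : V, u ≠ w ∧ ¬ T.Adj u w := by
    by_contra h
    push_neg at h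
    apply hnc
    ext u w
    simp only [SimpleGraph.top_adj]
    exact ⟨fun ha => ha.ne, fun hne => h u w hne⟩
  obtain ⟨u, w, huw, hnadj⟩ := hex
  have huB : u ∈ B := by
    have hx := hU ▸ Finset.mem_univ u
    rcases Finset.mem_union.mp hx with h1 | h1
    · exact absurd (hdomA u h1 w (Ne.symm huw)) hnadj
    · exact h1
  have huA : u ∉ A := Finset.disjoint_right.mp hAB huB
  have hclass := clique_class T A B hAB hU hdomA hindB
  have hmaxc : IsMaxCliqueOf T (insert u A) := by
    constructor
    · apply (hclass _).mpr
      have hss : insert u A ∩ B ⊆ {u} := by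
        intro x hx
        rcases Finset.mem_inter.mp hx with ⟨hx1, hx2⟩
        rcases Finset.mem_insert.mp hx1 with rfl | hxa
        · exact Finset.mem_singleton_self _
        · exact absurd hx2 (Finset.disjoint_left.mp hAB hxa)
      calc (insert u A ∩ B).card ≤ ({u} : Finset V).card := Finset.card_le_card hss
        _ = 1 := Finset.card_singleton u
    · intro t htcl hsub
      refine Finset.Subset.antisymm hsub ?_
      intro x hx
      have hxu := hU ▸ Finset.mem_univ x
      rcases Finset.mem_union.mp hxu with h1 | h1
      · exact Finset.mem_insert_of_mem h1
      · by_cases hxu' : x = u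
        · exact hxu' ▸ Finset.mem_insert_self u A
        · exact absurd (htcl (Finset.mem_coe.mpr hx)
            (Finset.mem_coe.mpr (hsub (Finset.mem_insert_self u A))) hxu')
            (hindB x h1 u huB)
  set k := A.card with hk
  set m := B.card with hm
  have hdk : d = k + 1 := by
    have hpc := hpure _ hmaxc
    rw [Finset.card_insert_of_notMem huA] at hpc
    omega
  subst hdk
  have hcc : ∀ j : ℕ, cliqueCount T (j+1) = k.choose (j+1) + m * k.choose j := by
    intro j
    rw [clique_count_split T A B hAB hU hdomA hindB (j+1) (by omega)]
    simp
    rfl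
  have hre : ∀ f : ℕ → ℤ,
      ∑ i ∈ Finset.Icc 1 (k+1), f i = ∑ j ∈ Finset.range (k+1), f (j+1) := by
    intro f
    rw [← Finset.Ico_add_one_right_eq_Icc, Finset.sum_Ico_eq_sum_range]
    exact Finset.sum_congr rfl fun j _ => by rw [Nat.add_comm]
  have hzero : ∀ y : ℤ, ∑ j ∈ Finset.range (k+1),
      (b (j+1) - (if j + 1 = k + 1 then (m:ℤ) else 1)) * y ^ j = 0 := by
    intro y
    have h1 := hb (y - 1)
    rw [hre, hre] at h1
    simp only [Nat.add_sub_cancel, sub_add_cancel] at h1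
    have h2 : ∑ j ∈ Finset.range (k+1), (cliqueCount T (j+1) : ℤ) * (y-1) ^ j
        = ∑ j ∈ Finset.range (k+1), (if j + 1 = k + 1 then (m:ℤ) else 1) * y ^ j := by
      calc ∑ j ∈ Finset.range (k+1), (cliqueCount T (j+1) : ℤ) * (y-1) ^ j
          = ∑ j ∈ Finset.range (k+1),
              ((k.choose (j+1) + m * k.choose j : ℕ) : ℤ) * (y-1) ^ j :=
            Finset.sum_congr rfl fun j _ => by rw [hcc j]
        _ = ∑ j ∈ Finset.range (k+1), (if j + 1 = k + 1 then (m:ℤ) else 1) * ((y-1)+1) ^ j :=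
            cval k m (y-1)
        _ = ∑ j ∈ Finset.range (k+1), (if j + 1 = k + 1 then (m:ℤ) else 1) * y ^ j := by
            simp only [sub_add_cancel]
    rw [h2] at h1
    calc ∑ j ∈ Finset.range (k+1),
          (b (j+1) - (if j + 1 = k + 1 then (m:ℤ) else 1)) * y ^ j
        = ∑ j ∈ Finset.range (k+1),
            (b (j+1) * y ^ j - (if j + 1 = k + 1 then (m:ℤ) else 1) * y ^ j) :=
          Finset.sum_congr rfl fun j _ => sub_mul _ _ _
      _ = (∑ j ∈ Finset.range (k+1), b (j+1) * y ^ j)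
            - ∑ j ∈ Finset.range (k+1), (if j + 1 = k + 1 then (m:ℤ) else 1) * y ^ j :=
          Finset.sum_sub_distrib _ _
      _ = 0 := sub_eq_zero_of_eq h1
  have hcoeff := coeff_zero_of_eval_zero (k+1)
    (fun j => b (j+1) - (if j + 1 = k + 1 then (m:ℤ) else 1)) hzero
  constructor
  · intro i hi1 hi2
    have hcz := hcoeff (i - 1) (by omega)
    have hι : i - 1 + 1 = i := by omega
    rw [hι, if_neg (by omega)] at hcz
    omega
  · intro W s t hs ht
    rw [pure_of_split T A B hAB hU hdomA hindB W s hs,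
        pure_of_split T A B hAB hU hdomA hindB W t ht]
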